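/- arXiv:2306.08172 — 3 statements merged into one kernel-verified Lean document; each statement's English description precedes it below -/
import Mathlib

section
/- Let $b>1$ and let $f,g:[1,b]\to\mathbb{R}$ be measurable with $f^2$ and $g^2$ integrable on $[1,b]$ and $g(x)\neq 0$ for all $x\in(1,b)$. Define $M(g,t)=\frac{1}{g^2(t)}\int_t^b\Big(\frac{1}{x^2}\int_1^x g^2(u)\,du\Big)dx$ for $t\in(1,b)$, and suppose $M(g,t)\le C$ for all $t\in(1,b)$. Then $\int_1^b\Big(\frac{1}{x}\int_1^x f(t)\,dt\Big)^2 dx \le C\int_1^b f^2(t)\,dt$. -/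
open Real MeasureTheory Set
open scoped ENNReal

theorem hardy_test_function_method (b : ℝ) (hb : 1 < b) (f g : ℝ → ℝ)
    (hfm : Measurable f) (hgm : Measurable g)
    (hf : IntegrableOn (fun x => f x ^ 2) (Set.Icc 1 b))
    (hg : IntegrableOn (fun x => g x ^ 2) (Set.Icc 1 b))
    (hgne : ∀ x ∈ Set.Ioo (1 : ℝ) b, g x ≠ 0)
    (C : ℝ)
    (hM : ∀ t ∈ Set.Ioo (1 : ℝ) b,
      (1 / g t ^ 2) *
          ∫ x in t..b, (1 / x ^ 2) * ∫ u in (1 : ℝ)..x, g u ^ 2 ≤ C) :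
    ∫ x in (1 : ℝ)..b, ((1 / x) * ∫ t in (1 : ℝ)..x, f t) ^ 2
      ≤ C * ∫ t in (1 : ℝ)..b, f t ^ 2 := by
  -- basic notation
  set φ : ℝ → ℝ≥0∞ := fun t => ENNReal.ofReal ((f t / g t) ^ 2) with hφdef
  set ψ : ℝ → ℝ≥0∞ := fun t => ENNReal.ofReal (g t ^ 2) with hψdef
  have hφmeas : Measurable φ := (((hfm.div hgm).pow measurable_const)).ennreal_ofReal
  have hψmeas : Measurable ψ := ((hgm.pow measurable_const)).ennreal_ofReal
  -- C is nonnegative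
  have hGnonneg : ∀ x : ℝ, 1 ≤ x → 0 ≤ ∫ u in (1:ℝ)..x, g u ^ 2 := by
    intro x hx
    exact intervalIntegral.integral_nonneg hx (fun u _ => sq_nonneg _)
  have hVnonneg : ∀ t : ℝ, 1 ≤ t → t ≤ b →
      0 ≤ ∫ x in t..b, (1 / x ^ 2) * ∫ u in (1:ℝ)..x, g u ^ 2 := by
    intro t ht htb
    refine intervalIntegral.integral_nonneg htb (fun x hx => ?_)
    exact mul_nonneg (by positivity) (hGnonneg x (le_trans ht hx.1))
  have hC : 0 ≤ C := by
    have hmid : (1 + b) / 2 ∈ Set.Ioo (1:ℝ) b := ⟨by linarith, by linarith⟩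
    refine le_trans ?_ (hM _ hmid)
    exact mul_nonneg (by positivity) (hVnonneg _ hmid.1.le hmid.2.le)
  -- f is integrable on [1, b]
  have hf1 : IntegrableOn f (Set.Icc 1 b) := by
    have hbound : IntegrableOn (fun x => (f x ^ 2 + 1) / 2) (Set.Icc 1 b) := by
      exact ((hf.add (integrableOn_const measure_Icc_lt_top.ne)).div_const 2)
    refine Integrable.mono' hbound hfm.aestronglyMeasurable ?_
    refine Filter.Eventually.of_forall fun x => ?_
    have := sq_nonneg (|f x| - 1)
    have h2 : |f x| ^ 2 = f x ^ 2 := sq_abs _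
    rw [Real.norm_eq_abs]
    nlinarith
  -- the primitive F
  set F : ℝ → ℝ := fun x => ∫ t in (1:ℝ)..x, f t with hFdef
  have hFcont : ContinuousOn F (Set.Icc 1 b) := by
    have := intervalIntegral.continuousOn_primitive_interval
      (a := (1:ℝ)) (b := b) (f := f) (μ := volume) ?_
    · rwa [Set.uIcc_of_le hb.le] at this
    · rwa [Set.uIcc_of_le hb.le]
  -- the LHS integrand is integrable on [1,b]
  have hLHScont : ContinuousOn (fun x => ((1 / x) * F x) ^ 2) (Set.Icc 1 b) := by
    refine (ContinuousOn.mul ?_ hFcont).pow 2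
    refine ContinuousOn.div continuousOn_const continuousOn_id fun x hx => ?_
    exact ne_of_gt (lt_of_lt_of_le one_pos hx.1)
  have hLHSint : IntegrableOn (fun x => ((1 / x) * F x) ^ 2) (Set.Icc 1 b) :=
    hLHScont.integrableOn_Icc
  -- Step A : LHS as a lintegral over (1,b)
  have hA : ENNReal.ofReal (∫ x in (1:ℝ)..b, ((1 / x) * F x) ^ 2)
      = ∫⁻ x in Set.Ioo 1 b, ENNReal.ofReal (((1 / x) * F x) ^ 2) := by
    rw [intervalIntegral.integral_of_le hb.le, integral_Ioc_eq_integral_Ioo,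
      ofReal_integral_eq_lintegral_ofReal (hLHSint.mono_set Set.Ioo_subset_Icc_self)
        (Filter.Eventually.of_forall fun x => sq_nonneg _)]
  -- Step B : pointwise Cauchy-Schwarz bound
  have hB : ∀ x ∈ Set.Ioo (1:ℝ) b,
      ENNReal.ofReal (((1 / x) * F x) ^ 2)
        ≤ ENNReal.ofReal (1 / x ^ 2) *
            ((∫⁻ t in Set.Ioo 1 x, φ t) * (∫⁻ t in Set.Ioo 1 x, ψ t)) := by
    intro x hx
    have hx1 : (1:ℝ) < x := hx.1
    set A : ℝ → ℝ≥0∞ := fun t => ENNReal.ofReal |f t / g t| with hAdef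
    set B : ℝ → ℝ≥0∞ := fun t => ENNReal.ofReal |g t| with hBdef
    have hAmeas : Measurable A := ((hfm.div hgm).abs).ennreal_ofReal
    have hBmeas : Measurable B := (hgm.abs).ennreal_ofReal
    have key : ENNReal.ofReal |F x|
        ≤ (∫⁻ t in Set.Ioo 1 x, φ t) ^ (1/2 : ℝ) * (∫⁻ t in Set.Ioo 1 x, ψ t) ^ (1/2 : ℝ) := by
      have hFx : F x = ∫ t in Set.Ioc (1:ℝ) x, f t := intervalIntegral.integral_of_le hx1.le
      have h1 : ENNReal.ofReal |F x| ≤ ∫⁻ t in Set.Ioo 1 x, (‖f t‖₊ : ℝ≥0∞) := by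
        calc ENNReal.ofReal |F x| = (‖F x‖₊ : ℝ≥0∞) := by
              rw [← Real.norm_eq_abs]; exact ofReal_norm _
          _ ≤ ∫⁻ t in Set.Ioc 1 x, (‖f t‖₊ : ℝ≥0∞) := by
              rw [hFx]; exact enorm_integral_le_lintegral_enorm f
          _ = ∫⁻ t in Set.Ioo 1 x, (‖f t‖₊ : ℝ≥0∞) := setLIntegral_congr Ioo_ae_eq_Ioc.symm
      have h2 : ∫⁻ t in Set.Ioo 1 x, (‖f t‖₊ : ℝ≥0∞)
          = ∫⁻ t in Set.Ioo 1 x, (A * B) t := by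
        refine setLIntegral_congr_fun measurableSet_Ioo (
          fun t ht => ?_)
        have hgt : g t ≠ 0 := hgne t ⟨ht.1, ht.2.trans hx.2⟩
        show (‖f t‖₊ : ℝ≥0∞) = ENNReal.ofReal |f t / g t| * ENNReal.ofReal |g t|
        rw [← ENNReal.ofReal_mul (abs_nonneg _), ← abs_mul, div_mul_cancel₀ _ hgt,
          ← Real.norm_eq_abs]; exact (ofReal_norm _).symm
      have hpq : Real.HolderConjugate 2 2 := Real.HolderConjugate.two_two
      have h3 := ENNReal.lintegral_mul_le_Lp_mul_Lq (volume.restrict (Set.Ioo 1 x)) hpq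
        hAmeas.aemeasurable hBmeas.aemeasurable
      have hA2 : ∫⁻ t in Set.Ioo 1 x, A t ^ (2:ℝ) = ∫⁻ t in Set.Ioo 1 x, φ t := by
        refine lintegral_congr fun t => ?_
        rw [hAdef, hφdef]
        rw [ENNReal.ofReal_rpow_of_nonneg (abs_nonneg _) (by norm_num), Real.rpow_two, sq_abs]
      have hB2 : ∫⁻ t in Set.Ioo 1 x, B t ^ (2:ℝ) = ∫⁻ t in Set.Ioo 1 x, ψ t := by
        refine lintegral_congr fun t => ?_
        rw [hBdef, hψdef]
        rw [ENNReal.ofReal_rpow_of_nonneg (abs_nonneg _) (by norm_num), Real.rpow_two, sq_abs]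
      calc ENNReal.ofReal |F x| ≤ ∫⁻ t in Set.Ioo 1 x, (A * B) t := h1.trans_eq h2
        _ ≤ (∫⁻ t in Set.Ioo 1 x, A t ^ (2:ℝ)) ^ (1/2:ℝ) *
              (∫⁻ t in Set.Ioo 1 x, B t ^ (2:ℝ)) ^ (1/2:ℝ) := h3
        _ = (∫⁻ t in Set.Ioo 1 x, φ t) ^ (1/2:ℝ) *
              (∫⁻ t in Set.Ioo 1 x, ψ t) ^ (1/2:ℝ) := by rw [hA2, hB2]
    have key2 : ENNReal.ofReal ((F x) ^ 2)
        ≤ (∫⁻ t in Set.Ioo 1 x, φ t) * (∫⁻ t in Set.Ioo 1 x, ψ t) := by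
      have heq : ENNReal.ofReal ((F x) ^ 2) = (ENNReal.ofReal |F x|) ^ 2 := by
        rw [← sq_abs, ENNReal.ofReal_pow (abs_nonneg _)]
      rw [heq]
      calc (ENNReal.ofReal |F x|) ^ 2
          ≤ ((∫⁻ t in Set.Ioo 1 x, φ t) ^ (1/2:ℝ) * (∫⁻ t in Set.Ioo 1 x, ψ t) ^ (1/2:ℝ)) ^ 2 :=
            pow_le_pow_left₀ zero_le key 2
        _ = (∫⁻ t in Set.Ioo 1 x, φ t) * (∫⁻ t in Set.Ioo 1 x, ψ t) := by
            rw [mul_pow, ← ENNReal.rpow_natCast ((∫⁻ t in Set.Ioo 1 x, φ t) ^ (1/2:ℝ)) 2,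
              ← ENNReal.rpow_natCast ((∫⁻ t in Set.Ioo 1 x, ψ t) ^ (1/2:ℝ)) 2,
              ← ENNReal.rpow_mul, ← ENNReal.rpow_mul]
            norm_num
    have hsplit : ((1 / x) * F x) ^ 2 = (1 / x ^ 2) * (F x) ^ 2 := by ring
    rw [hsplit, ENNReal.ofReal_mul (by positivity)]
    exact mul_le_mul_right key2 _
  -- the weight W
  set W : ℝ → ℝ≥0∞ := fun x => ENNReal.ofReal (1 / x ^ 2) * ∫⁻ t in Set.Ioo 1 x, ψ t with hWdef
  have hWmono : Monotone fun x => ∫⁻ t in Set.Ioo (1:ℝ) x, ψ t := fun x y hxy =>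
    lintegral_mono_set (Set.Ioo_subset_Ioo_right hxy)
  have hWmeas : Measurable W :=
    ((measurable_const.div ((measurable_id.pow measurable_const))).ennreal_ofReal).mul
      hWmono.measurable
  -- Step 1 : monotone bound
  have hstep1 : ∫⁻ x in Set.Ioo 1 b, ENNReal.ofReal (((1 / x) * F x) ^ 2)
      ≤ ∫⁻ x in Set.Ioo 1 b, W x * ∫⁻ t in Set.Ioo 1 x, φ t := by
    refine setLIntegral_mono_ae' measurableSet_Ioo (Filter.Eventually.of_forall
      fun x hx => ?_)
    refine (hB x hx).trans_eq ?_
    rw [hWdef]; ring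
  -- Tonelli : swap the order of integration
  set S : Set (ℝ × ℝ) := {p : ℝ × ℝ | 1 < p.2 ∧ p.2 < p.1 ∧ p.1 < b} with hSdef
  have hSmeas : MeasurableSet S :=
    (measurableSet_lt measurable_const measurable_snd).inter
      ((measurableSet_lt measurable_snd measurable_fst).inter
        (measurableSet_lt measurable_fst measurable_const))
  set K : ℝ × ℝ → ℝ≥0∞ := S.indicator (fun p => W p.1 * φ p.2) with hKdef
  have hKmeas : Measurable K :=
    (((hWmeas.comp measurable_fst).mul (hφmeas.comp measurable_snd)).indicator hSmeas)
  have hLHSeqK : ∫⁻ x in Set.Ioo 1 b, W x * ∫⁻ t in Set.Ioo 1 x, φ t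
      = ∫⁻ x, ∫⁻ t, K (x, t) := by
    rw [← lintegral_indicator measurableSet_Ioo]
    refine lintegral_congr fun x => ?_
    by_cases hx : x ∈ Set.Ioo (1:ℝ) b
    · rw [Set.indicator_of_mem hx, ← lintegral_const_mul _ hφmeas,
        ← lintegral_indicator measurableSet_Ioo]
      refine lintegral_congr fun t => ?_
      by_cases ht : t ∈ Set.Ioo (1:ℝ) x
      · rw [Set.indicator_of_mem ht, hKdef,
          Set.indicator_of_mem (show (x, t) ∈ S from ⟨ht.1, ht.2, hx.2⟩)]
      · rw [Set.indicator_of_notMem ht, hKdef,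
          Set.indicator_of_notMem (fun hmem => ht ⟨hmem.1, hmem.2.1⟩)]
    · rw [Set.indicator_of_notMem hx]
      have hzero : ∀ t : ℝ, K (x, t) = 0 := by
        intro t
        apply Set.indicator_of_notMem
        intro hmem
        exact hx ⟨hmem.1.trans hmem.2.1, hmem.2.2⟩
      simp [hzero]
  have hRHSeqK : ∫⁻ t, ∫⁻ x, K (x, t) = ∫⁻ t in Set.Ioo 1 b, φ t * ∫⁻ x in Set.Ioo t b, W x := by
    rw [← lintegral_indicator measurableSet_Ioo]
    refine lintegral_congr fun t => ?_
    by_cases ht : t ∈ Set.Ioo (1:ℝ) b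
    · rw [Set.indicator_of_mem ht]
      calc ∫⁻ x, K (x, t) = ∫⁻ x, (Set.Ioo t b).indicator (fun x => W x * φ t) x := by
            refine lintegral_congr fun x => ?_
            by_cases hxm : x ∈ Set.Ioo t b
            · rw [hKdef, Set.indicator_of_mem (show (x, t) ∈ S from ⟨ht.1, hxm.1, hxm.2⟩),
                Set.indicator_of_mem hxm]
            · rw [hKdef, Set.indicator_of_notMem (fun hmem => hxm ⟨hmem.2.1, hmem.2.2⟩),
                Set.indicator_of_notMem hxm]
        _ = ∫⁻ x in Set.Ioo t b, W x * φ t := lintegral_indicator measurableSet_Ioo _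
        _ = (∫⁻ x in Set.Ioo t b, W x) * φ t := lintegral_mul_const _ hWmeas
        _ = φ t * ∫⁻ x in Set.Ioo t b, W x := mul_comm _ _
    · rw [Set.indicator_of_notMem ht]
      have hzero : ∀ x : ℝ, K (x, t) = 0 := by
        intro x
        apply Set.indicator_of_notMem
        intro hmem
        exact ht ⟨hmem.1, hmem.2.1.trans hmem.2.2⟩
      simp [hzero]
  have hswap : ∫⁻ x, ∫⁻ t, K (x, t) = ∫⁻ t, ∫⁻ x, K (x, t) :=
    lintegral_lintegral_swap hKmeas.aemeasurable
  -- Step E : bound the inner integral using the hypothesis on M(g,t)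
  have hGcont : ContinuousOn (fun x => ∫ u in (1:ℝ)..x, g u ^ 2) (Set.Icc 1 b) := by
    have := intervalIntegral.continuousOn_primitive_interval
      (a := (1:ℝ)) (b := b) (f := fun u => g u ^ 2) (μ := volume) ?_
    · rwa [Set.uIcc_of_le hb.le] at this
    · rwa [Set.uIcc_of_le hb.le]
  have hWle : ∀ t ∈ Set.Ioo (1:ℝ) b,
      ∫⁻ x in Set.Ioo t b, W x ≤ ENNReal.ofReal (C * g t ^ 2) := by
    intro t ht
    set V : ℝ → ℝ := fun x => (1 / x ^ 2) * ∫ u in (1:ℝ)..x, g u ^ 2 with hVdef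
    have hVcont : ContinuousOn V (Set.Icc t b) := by
      refine ContinuousOn.mul ?_ (hGcont.mono (Set.Icc_subset_Icc ht.1.le le_rfl))
      refine ContinuousOn.div continuousOn_const (continuousOn_id.pow 2) fun x hx => ?_
      have : (0:ℝ) < x := lt_trans one_pos (lt_of_lt_of_le ht.1 hx.1)
      positivity
    have hVint : IntegrableOn V (Set.Ioo t b) :=
      hVcont.integrableOn_Icc.mono_set Set.Ioo_subset_Icc_self
    have hψeq : ∀ x ∈ Set.Ioo t b, W x = ENNReal.ofReal (V x) := by
      intro x hx
      have hx1 : (1:ℝ) < x := ht.1.trans hx.1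
      have hgint : IntegrableOn (fun u => g u ^ 2) (Set.Ioc 1 x) :=
        hg.mono_set (fun u hu => ⟨hu.1.le, hu.2.trans hx.2.le⟩)
      have hinner : ∫⁻ u in Set.Ioo 1 x, ψ u = ENNReal.ofReal (∫ u in (1:ℝ)..x, g u ^ 2) := by
        rw [intervalIntegral.integral_of_le hx1.le, integral_Ioc_eq_integral_Ioo,
          ofReal_integral_eq_lintegral_ofReal (hgint.mono_set Set.Ioo_subset_Ioc_self)
            (Filter.Eventually.of_forall fun u => sq_nonneg _)]
      rw [hWdef]
      show ENNReal.ofReal (1 / x ^ 2) * ∫⁻ u in Set.Ioo 1 x, ψ u = ENNReal.ofReal (V x)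
      rw [hinner, ← ENNReal.ofReal_mul (by positivity)]
    have hVae : 0 ≤ᵐ[volume.restrict (Set.Ioo t b)] V := by
      refine ae_restrict_of_forall_mem measurableSet_Ioo fun x hx => ?_
      exact mul_nonneg (by positivity) (hGnonneg x (le_trans ht.1.le (le_of_lt hx.1)))
    have hIeq : ∫⁻ x in Set.Ioo t b, W x = ENNReal.ofReal (∫ x in Set.Ioo t b, V x) := by
      rw [setLIntegral_congr_fun measurableSet_Ioo hψeq,
        ofReal_integral_eq_lintegral_ofReal hVint hVae]
    rw [hIeq]
    apply ENNReal.ofReal_le_ofReal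
    have hg2 : (0:ℝ) < g t ^ 2 :=
      lt_of_le_of_ne (sq_nonneg _) (Ne.symm (pow_ne_zero 2 (hgne t ht)))
    have hMt := hM t ht
    rw [one_div, inv_mul_eq_div, div_le_iff₀ hg2] at hMt
    calc ∫ x in Set.Ioo t b, V x = ∫ x in t..b, V x := by
          rw [intervalIntegral.integral_of_le ht.2.le, integral_Ioc_eq_integral_Ioo]
      _ ≤ C * g t ^ 2 := hMt
  -- Step F : conclude
  have hfsq : Measurable fun t => ENNReal.ofReal (f t ^ 2) :=
    (hfm.pow measurable_const).ennreal_ofReal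
  have hfinal : ∫⁻ t in Set.Ioo 1 b, φ t * ∫⁻ x in Set.Ioo t b, W x
      ≤ ENNReal.ofReal C * ∫⁻ t in Set.Ioo 1 b, ENNReal.ofReal (f t ^ 2) := by
    calc ∫⁻ t in Set.Ioo 1 b, φ t * ∫⁻ x in Set.Ioo t b, W x
        ≤ ∫⁻ t in Set.Ioo 1 b, φ t * ENNReal.ofReal (C * g t ^ 2) := by
          refine setLIntegral_mono_ae' measurableSet_Ioo (Filter.Eventually.of_forall
            fun t ht => ?_)
          exact mul_le_mul_right (hWle t ht) _
      _ = ∫⁻ t in Set.Ioo 1 b, ENNReal.ofReal C * ENNReal.ofReal (f t ^ 2) := by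
          refine setLIntegral_congr_fun measurableSet_Ioo (
            fun t ht => ?_)
          have hgt : g t ≠ 0 := hgne t ht
          rw [hφdef]
          show ENNReal.ofReal ((f t / g t) ^ 2) * ENNReal.ofReal (C * g t ^ 2)
            = ENNReal.ofReal C * ENNReal.ofReal (f t ^ 2)
          rw [← ENNReal.ofReal_mul (sq_nonneg _), ← ENNReal.ofReal_mul hC]
          congr 1
          field_simp
      _ = ENNReal.ofReal C * ∫⁻ t in Set.Ioo 1 b, ENNReal.ofReal (f t ^ 2) :=
          lintegral_const_mul _ hfsq
  have hRHSofReal : ∫⁻ t in Set.Ioo 1 b, ENNReal.ofReal (f t ^ 2)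
      = ENNReal.ofReal (∫ t in (1:ℝ)..b, f t ^ 2) := by
    rw [intervalIntegral.integral_of_le hb.le, integral_Ioc_eq_integral_Ioo,
      ofReal_integral_eq_lintegral_ofReal (hf.mono_set Set.Ioo_subset_Icc_self)
        (Filter.Eventually.of_forall fun t => sq_nonneg _)]
  -- Assemble
  have chain : ENNReal.ofReal (∫ x in (1:ℝ)..b, ((1 / x) * F x) ^ 2)
      ≤ ENNReal.ofReal (C * ∫ t in (1:ℝ)..b, f t ^ 2) := by
    rw [hA]
    calc ∫⁻ x in Set.Ioo 1 b, ENNReal.ofReal (((1 / x) * F x) ^ 2)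
        ≤ ∫⁻ x in Set.Ioo 1 b, W x * ∫⁻ t in Set.Ioo 1 x, φ t := hstep1
      _ = ∫⁻ t in Set.Ioo 1 b, φ t * ∫⁻ x in Set.Ioo t b, W x := by
          rw [hLHSeqK, hswap, hRHSeqK]
      _ ≤ ENNReal.ofReal C * ∫⁻ t in Set.Ioo 1 b, ENNReal.ofReal (f t ^ 2) := hfinal
      _ = ENNReal.ofReal (C * ∫ t in (1:ℝ)..b, f t ^ 2) := by
          rw [hRHSofReal, ← ENNReal.ofReal_mul hC]
  exact (ENNReal.ofReal_le_ofReal_iff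
    (mul_nonneg hC (intervalIntegral.integral_nonneg hb.le fun t _ => sq_nonneg _))).mp chain
end

section
/- Let $n\ge 1$ and let $\alpha$ be the unique solution of $\tan(\alpha\ln(n+1))+2\alpha=0$ in the interval $(\pi/(2\ln(n+1)),\,\pi/\ln(n+1))$. Then the function $x\mapsto \sqrt{x}\,\sin(\alpha\ln x)$ is monotonically increasing on $[1,n+1]$. -/
open Real

lemma key_sign (a θm θ : ℝ) (ha : 0 < a) (h1 : π / 2 < θm) (h2 : θm < π)
    (hroot : Real.tan θm = -(2 * a)) (h0 : 0 ≤ θ) (hθ : θ ≤ θm) :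
    0 ≤ Real.sin θ + 2 * a * Real.cos θ := by
  have hπ := Real.pi_pos
  by_cases hc : θ ≤ π / 2
  · have hs : 0 ≤ Real.sin θ := Real.sin_nonneg_of_nonneg_of_le_pi h0 (by linarith)
    have hcos : 0 ≤ Real.cos θ := Real.cos_nonneg_of_mem_Icc ⟨by linarith, hc⟩
    nlinarith
  · push_neg at hc
    have hθπ : θ < π := lt_of_le_of_lt hθ h2
    have hcosneg : Real.cos θ < 0 :=
      Real.cos_neg_of_pi_div_two_lt_of_lt hc (by linarith)
    have htan : Real.tan θ ≤ Real.tan θm := by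
      rcases eq_or_lt_of_le hθ with h | h
      · rw [h]
      · have e1 : Real.tan (θ - π) = Real.tan θ := Real.tan_periodic.sub_eq θ
        have e2 : Real.tan (θm - π) = Real.tan θm := Real.tan_periodic.sub_eq θm
        rw [← e1, ← e2]
        exact le_of_lt (Real.tan_lt_tan_of_lt_of_lt_pi_div_two (by linarith)
          (by linarith) (by linarith))
    rw [hroot] at htan
    have hcosne : Real.cos θ ≠ 0 := ne_of_lt hcosneg
    have hsin : Real.tan θ * Real.cos θ = Real.sin θ := Real.tan_mul_cos hcosne
    nlinarith

theorem sqrt_sin_log_monotone (n : ℕ) (hn : 1 ≤ n) (α : ℝ)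
    (hα : α ∈ Set.Ioo (π / (2 * Real.log (n + 1))) (π / Real.log (n + 1)))
    (hroot : Real.tan (α * Real.log (n + 1)) + 2 * α = 0) :
    MonotoneOn (fun x : ℝ => Real.sqrt x * Real.sin (α * Real.log x))
      (Set.Icc 1 ((n : ℝ) + 1)) := by
  have hπ := Real.pi_pos
  have hn1 : (1 : ℝ) < (n : ℝ) + 1 := by
    have : (1 : ℝ) ≤ (n : ℝ) := by exact_mod_cast hn
    linarith
  have hL : 0 < Real.log ((n : ℝ) + 1) := Real.log_pos hn1
  set L := Real.log ((n : ℝ) + 1) with hLdef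
  obtain ⟨hα1, hα2⟩ := hα
  have hαpos : 0 < α := lt_trans (by positivity) hα1
  have hαL1 : π / 2 < α * L := by
    rw [div_lt_iff₀ (by linarith)] at hα1
    nlinarith
  have hαL2 : α * L < π := by
    rw [lt_div_iff₀ hL] at hα2
    linarith
  have hroot' : Real.tan (α * L) = -(2 * α) := by linarith
  -- derivative
  have hderiv : ∀ x ∈ Set.Ioo (1 : ℝ) ((n : ℝ) + 1),
      HasDerivAt (fun x : ℝ => Real.sqrt x * Real.sin (α * Real.log x))
        ((Real.sin (α * Real.log x) + 2 * α * Real.cos (α * Real.log x)) / (2 * Real.sqrt x)) x := by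
    intro x hx
    have hx0 : (0 : ℝ) < x := lt_trans one_pos hx.1
    have hxne : x ≠ 0 := ne_of_gt hx0
    have hsx : 0 < Real.sqrt x := Real.sqrt_pos.mpr hx0
    have h1 : HasDerivAt (fun x : ℝ => Real.sqrt x) (1 / (2 * Real.sqrt x)) x :=
      Real.hasDerivAt_sqrt hxne
    have h2 : HasDerivAt (fun x : ℝ => α * Real.log x) (α * x⁻¹) x :=
      (Real.hasDerivAt_log hxne).const_mul α
    have h3 : HasDerivAt (fun x : ℝ => Real.sin (α * Real.log x))
        (Real.cos (α * Real.log x) * (α * x⁻¹)) x := (Real.hasDerivAt_sin _).comp x h2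
    have h4 := h1.mul h3
    simp only [Pi.mul_def] at h4
    refine h4.congr_deriv (Eq.symm ?_)
    have hsq : Real.sqrt x * Real.sqrt x = x := Real.mul_self_sqrt hx0.le
    have hne : Real.sqrt x ≠ 0 := ne_of_gt hsx
    field_simp
    linear_combination (-2 * α * Real.cos (α * Real.log x)) * hsq
  have hdiff : DifferentiableOn ℝ (fun x : ℝ => Real.sqrt x * Real.sin (α * Real.log x))
      (interior (Set.Icc 1 ((n : ℝ) + 1))) := by
    rw [interior_Icc]
    intro x hx
    exact (hderiv x hx).differentiableAt.differentiableWithinAt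
  have hcont : ContinuousOn (fun x : ℝ => Real.sqrt x * Real.sin (α * Real.log x))
      (Set.Icc 1 ((n : ℝ) + 1)) := by
    apply ContinuousOn.mul (Real.continuous_sqrt.continuousOn)
    apply Real.continuous_sin.comp_continuousOn
    apply continuousOn_const.mul
    apply Real.continuousOn_log.mono
    intro x hx
    simp only [Set.mem_compl_iff, Set.mem_singleton_iff]
    have : (1 : ℝ) ≤ x := hx.1
    intro h; rw [h] at this; linarith
  apply monotoneOn_of_deriv_nonneg (convex_Icc _ _) hcont hdiff
  intro x hx
  rw [interior_Icc] at hx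
  rw [(hderiv x hx).deriv]
  have hx0 : (0 : ℝ) < x := lt_trans one_pos hx.1
  have hsx : 0 < Real.sqrt x := Real.sqrt_pos.mpr hx0
  have hlog0 : 0 ≤ Real.log x := Real.log_nonneg hx.1.le
  have hlogL : Real.log x ≤ L := Real.log_le_log hx0 (by linarith [hx.2])
  have hkey := key_sign α (α * L) (α * Real.log x) hαpos hαL1 hαL2 hroot'
    (by positivity) (by nlinarith)
  positivity
end

section
/- Let $n\ge 1$, let $\alpha$ be the unique solution of $\tan(\alpha\ln(n+1))+2\alpha=0$ in $(\pi/(2\ln(n+1)),\,\pi/\ln(n+1))$, let $h(x)=x^{-1/2}\big(2\alpha\cos(\alpha\ln x)+\sin(\alpha\ln x)\big)$, and set $a_k=\int_k^{k+1}h(x)\,dx$ for $k=1,\dots,n$. Then for every $i$ with $1\le i\le n$, $\sum_{k=i}^{n}\frac{1}{k^2}\sum_{j=1}^{k}a_j \;\ge\; \frac{4}{1+4\alpha^2}\,a_i$. -/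
open Real MeasureTheory Finset

lemma aux_hasDerivAt_H (α x : ℝ) (hx : 0 < x) :
    HasDerivAt (fun y : ℝ => 2 * y ^ ((1:ℝ)/2) * Real.sin (α * Real.log y))
      (x ^ (-(1:ℝ)/2) * (2 * α * Real.cos (α * Real.log x) + Real.sin (α * Real.log x))) x := by
  have hlog : HasDerivAt (fun y : ℝ => α * Real.log y) (α * x⁻¹) x :=
    (Real.hasDerivAt_log hx.ne').const_mul α
  have hsin : HasDerivAt (fun y : ℝ => Real.sin (α * Real.log y))
      (Real.cos (α * Real.log x) * (α * x⁻¹)) x :=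
    (Real.hasDerivAt_sin _).comp x hlog
  have hpow : HasDerivAt (fun y : ℝ => 2 * y ^ ((1:ℝ)/2))
      (2 * ((1:ℝ)/2 * x ^ ((1:ℝ)/2 - 1))) x :=
    (Real.hasDerivAt_rpow_const (Or.inl hx.ne')).const_mul 2
  have H := hpow.mul hsin
  have e1 : x ^ ((1:ℝ)/2 - 1) = x ^ (-(1:ℝ)/2) := by norm_num
  have e2 : x ^ ((1:ℝ)/2) * x⁻¹ = x ^ (-(1:ℝ)/2) := by
    rw [← Real.rpow_neg_one x, ← Real.rpow_add hx]
    norm_num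
  refine H.congr_deriv ?_
  rw [e1, show 2 * x ^ ((1:ℝ)/2) * (Real.cos (α*Real.log x) * (α * x⁻¹))
      = 2*α*Real.cos (α*Real.log x) * (x ^ ((1:ℝ)/2) * x⁻¹) from by ring, e2]
  ring

lemma aux_hasDerivAt_h (α x : ℝ) (hx : 0 < x) :
    HasDerivAt (fun y : ℝ => y ^ (-(1:ℝ)/2) *
        (2 * α * Real.cos (α * Real.log y) + Real.sin (α * Real.log y)))
      (-(1/2 + 2*α^2) * x ^ (-(3:ℝ)/2) * Real.sin (α * Real.log x)) x := by
  have hlog : HasDerivAt (fun y : ℝ => α * Real.log y) (α * x⁻¹) x :=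
    (Real.hasDerivAt_log hx.ne').const_mul α
  have hsin : HasDerivAt (fun y : ℝ => Real.sin (α * Real.log y))
      (Real.cos (α * Real.log x) * (α * x⁻¹)) x :=
    (Real.hasDerivAt_sin _).comp x hlog
  have hcos : HasDerivAt (fun y : ℝ => Real.cos (α * Real.log y))
      (-Real.sin (α * Real.log x) * (α * x⁻¹)) x :=
    (Real.hasDerivAt_cos _).comp x hlog
  have hin : HasDerivAt (fun y : ℝ => 2 * α * Real.cos (α * Real.log y) + Real.sin (α * Real.log y))
      (2 * α * (-Real.sin (α * Real.log x) * (α * x⁻¹)) + Real.cos (α * Real.log x) * (α * x⁻¹)) x :=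
    (hcos.const_mul (2*α)).add hsin
  have hpow : HasDerivAt (fun y : ℝ => y ^ (-(1:ℝ)/2))
      (-(1:ℝ)/2 * x ^ (-(1:ℝ)/2 - 1)) x :=
    Real.hasDerivAt_rpow_const (Or.inl hx.ne')
  have H := hpow.mul hin
  have e1 : x ^ (-(1:ℝ)/2 - 1) = x ^ (-(3:ℝ)/2) := by norm_num
  have e2 : x ^ (-(1:ℝ)/2) * x⁻¹ = x ^ (-(3:ℝ)/2) := by
    rw [← Real.rpow_neg_one x, ← Real.rpow_add hx]
    norm_num
  refine H.congr_deriv ?_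
  rw [e1]
  have e3 : ∀ c : ℝ, x ^ (-(1:ℝ)/2) * (c * (α * x⁻¹)) = c * α * x ^ (-(3:ℝ)/2) := by
    intro c
    rw [show x ^ (-(1:ℝ)/2) * (c * (α * x⁻¹)) = c * α * (x ^ (-(1:ℝ)/2) * x⁻¹) from by ring, e2]
  rw [mul_add (x ^ (-(1:ℝ)/2)),
    show x ^ (-(1:ℝ)/2) * (2 * α * (-Real.sin (α*Real.log x) * (α * x⁻¹)))
      = x ^ (-(1:ℝ)/2) * ((2 * α * -Real.sin (α*Real.log x)) * (α * x⁻¹)) from by ring,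
    e3, e3]
  ring

lemma aux_cont_g (α x : ℝ) (hx : 0 < x) :
    ContinuousAt (fun y : ℝ => 2 * y ^ (-(3:ℝ)/2) * Real.sin (α * Real.log y)) x := by
  have h1 : ContinuousAt (fun y : ℝ => y ^ (-(3:ℝ)/2)) x :=
    Real.continuousAt_rpow_const x _ (Or.inl hx.ne')
  have h2 : ContinuousAt (fun y : ℝ => Real.sin (α * Real.log y)) x :=
    Real.continuous_sin.continuousAt.comp
      (continuousAt_const.mul (Real.continuousAt_log hx.ne'))
  exact (continuousAt_const.mul h1).mul h2

lemma aux_telescope (F : ℕ → ℝ) (m k : ℕ) (hmk : m ≤ k) :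
    ∑ j ∈ Finset.Icc m k, (F (j+1) - F j) = F (k+1) - F m := by
  induction k, hmk using Nat.le_induction with
  | base => simp
  | succ k hk ih => rw [Finset.sum_Icc_succ_top (by omega), ih]; ring

set_option maxHeartbeats 2000000 in
theorem discrete_hardy_pointwise_bound (n : ℕ) (hn : 1 ≤ n) (α : ℝ)
    (hα : α ∈ Set.Ioo (π / (2 * Real.log (n + 1))) (π / Real.log (n + 1)))
    (hroot : Real.tan (α * Real.log (n + 1)) + 2 * α = 0)
    (h : ℝ → ℝ)
    (hh : ∀ x, h x = x ^ (-(1 : ℝ) / 2) *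
      (2 * α * Real.cos (α * Real.log x) + Real.sin (α * Real.log x)))
    (a : ℕ → ℝ) (ha : ∀ k, 1 ≤ k → k ≤ n → a k = ∫ x in (k : ℝ)..((k : ℝ) + 1), h x)
    (i : ℕ) (hi1 : 1 ≤ i) (hin : i ≤ n) :
    ∑ k ∈ Finset.Icc i n, (1 / (k : ℝ) ^ 2) * ∑ j ∈ Finset.Icc 1 k, a j
      ≥ (4 / (1 + 4 * α ^ 2)) * a i := by
  obtain ⟨hα1, hα2⟩ := hα
  have hn1 : (1:ℝ) < (n:ℝ) + 1 := by
    have : (1:ℝ) ≤ (n:ℝ) := by exact_mod_cast hn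
    linarith
  have hL : 0 < Real.log ((n:ℝ)+1) := Real.log_pos hn1
  have hα0 : 0 < α := lt_trans (by positivity) hα1
  have hθ1 : π/2 < α * Real.log ((n:ℝ)+1) := by
    have := (div_lt_iff₀ (by positivity : (0:ℝ) < 2 * Real.log ((n:ℝ)+1))).mp hα1
    nlinarith
  have hθ2 : α * Real.log ((n:ℝ)+1) < π := (lt_div_iff₀ hL).mp hα2
  have hcos : Real.cos (α * Real.log ((n:ℝ)+1)) < 0 :=
    Real.cos_neg_of_pi_div_two_lt_of_lt hθ1 (by linarith [Real.pi_pos])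
  have hsc : Real.sin (α * Real.log ((n:ℝ)+1)) + 2*α*Real.cos (α * Real.log ((n:ℝ)+1)) = 0 := by
    rw [Real.tan_eq_sin_div_cos] at hroot
    have hc0 : Real.cos (α * Real.log ((n:ℝ)+1)) ≠ 0 := ne_of_lt hcos
    field_simp at hroot
    linarith [hroot]
  have hfe : h = fun x : ℝ => x ^ (-(1 : ℝ) / 2) *
      (2 * α * Real.cos (α * Real.log x) + Real.sin (α * Real.log x)) := funext hh
  subst hfe
  set hf : ℝ → ℝ := fun x : ℝ => x ^ (-(1 : ℝ) / 2) *
      (2 * α * Real.cos (α * Real.log x) + Real.sin (α * Real.log x)) with hfdef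
  set Hf : ℝ → ℝ := fun x : ℝ => 2 * x ^ ((1:ℝ)/2) * Real.sin (α * Real.log x) with Hfdef
  set Gf : ℝ → ℝ := fun x : ℝ => (-4/(1+4*α^2)) * hf x with Gfdef
  have hend : hf ((n:ℝ)+1) = 0 := by
    show ((n:ℝ)+1) ^ (-(1 : ℝ) / 2) * _ = 0
    rw [show 2 * α * Real.cos (α * Real.log ((n:ℝ)+1)) + Real.sin (α * Real.log ((n:ℝ)+1)) = 0
      from by linarith, mul_zero]
  have hsinnn : ∀ x : ℝ, 1 ≤ x → x ≤ (n:ℝ)+1 → 0 ≤ Real.sin (α * Real.log x) := by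
    intro x hx1 hx2
    apply Real.sin_nonneg_of_nonneg_of_le_pi
    · exact mul_nonneg hα0.le (Real.log_nonneg hx1)
    · have hlog : Real.log x ≤ Real.log ((n:ℝ)+1) := Real.log_le_log (by linarith) hx2
      nlinarith
  -- antitonicity of hf
  have hanti : AntitoneOn hf (Set.Icc (1:ℝ) ((n:ℝ)+1)) := by
    apply antitoneOn_of_deriv_nonpos (convex_Icc _ _)
    · intro x hx
      exact ((aux_hasDerivAt_h α x (by linarith [hx.1] : (0:ℝ) < x)).continuousAt).continuousWithinAt
    · rw [interior_Icc]
      intro x hx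
      exact (aux_hasDerivAt_h α x (by linarith [hx.1] : (0:ℝ) < x)).differentiableAt.differentiableWithinAt
    · rw [interior_Icc]
      intro x hx
      rw [(aux_hasDerivAt_h α x (by linarith [hx.1] : (0:ℝ) < x)).deriv]
      have hs := hsinnn x hx.1.le hx.2.le
      have hx32 : (0:ℝ) ≤ x ^ (-(3:ℝ)/2) := Real.rpow_nonneg (by linarith [hx.1]) _
      nlinarith [mul_nonneg (mul_nonneg (show (0:ℝ) ≤ 1/2+2*α^2 by positivity) hx32) hs]
  have hpos : ∀ x : ℝ, 1 ≤ x → x ≤ (n:ℝ)+1 → 0 ≤ hf x := by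
    intro x hx1 hx2
    have := hanti (Set.mem_Icc.mpr ⟨hx1, hx2⟩) (Set.mem_Icc.mpr ⟨by linarith, le_refl _⟩) hx2
    rw [hend] at this
    exact this
  have hmono : MonotoneOn Hf (Set.Icc (1:ℝ) ((n:ℝ)+1)) := by
    apply monotoneOn_of_deriv_nonneg (convex_Icc _ _)
    · intro x hx
      exact ((aux_hasDerivAt_H α x (by linarith [hx.1] : (0:ℝ) < x)).continuousAt).continuousWithinAt
    · rw [interior_Icc]
      intro x hx
      exact (aux_hasDerivAt_H α x (by linarith [hx.1] : (0:ℝ) < x)).differentiableAt.differentiableWithinAt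
    · rw [interior_Icc]
      intro x hx
      rw [(aux_hasDerivAt_H α x (by linarith [hx.1] : (0:ℝ) < x)).deriv]
      exact hpos x hx.1.le hx.2.le
  -- FTC: a j = Hf (j+1) - Hf j
  have haj : ∀ j : ℕ, 1 ≤ j → j ≤ n → a j = Hf ((j:ℝ)+1) - Hf (j:ℝ) := by
    intro j hj1 hjn
    have hj1' : (1:ℝ) ≤ (j:ℝ) := by exact_mod_cast hj1
    rw [ha j hj1 hjn]
    apply intervalIntegral.integral_eq_sub_of_hasDerivAt
    · intro x hx
      rw [Set.uIcc_of_le (by linarith : (j:ℝ) ≤ (j:ℝ)+1)] at hx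
      exact aux_hasDerivAt_H α x (by linarith [hx.1])
    · apply ContinuousOn.intervalIntegrable
      intro x hx
      rw [Set.uIcc_of_le (by linarith : (j:ℝ) ≤ (j:ℝ)+1)] at hx
      exact ((aux_hasDerivAt_h α x (by linarith [hx.1] : (0:ℝ) < x)).continuousAt).continuousWithinAt
  have hHf1 : Hf (1:ℝ) = 0 := by
    show 2 * (1:ℝ) ^ ((1:ℝ)/2) * Real.sin (α * Real.log 1) = 0
    simp
  have hSk : ∀ k : ℕ, 1 ≤ k → k ≤ n → ∑ j ∈ Finset.Icc 1 k, a j = Hf ((k:ℝ)+1) := by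
    intro k hk1 hkn
    have : ∑ j ∈ Finset.Icc 1 k, a j
        = ∑ j ∈ Finset.Icc 1 k, ((fun m : ℕ => Hf (m:ℝ)) (j+1) - (fun m : ℕ => Hf (m:ℝ)) j) := by
      apply Finset.sum_congr rfl
      intro j hj
      simp only [Finset.mem_Icc] at hj
      rw [haj j hj.1 (le_trans hj.2 hkn)]
      push_cast
      ring_nf
    rw [this, aux_telescope (fun m : ℕ => Hf (m:ℝ)) 1 k hk1]
    push_cast
    rw [hHf1]
    ring_nf
  -- derivative of Gf
  have hG' : ∀ x : ℝ, 0 < x → HasDerivAt Gf (2 * x ^ (-(3:ℝ)/2) * Real.sin (α * Real.log x)) x := by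
    intro x hx
    have hD := (aux_hasDerivAt_h α x hx).const_mul (-4/(1+4*α^2))
    have hden : (1+4*α^2) ≠ 0 := by positivity
    refine hD.congr_deriv ?_
    field_simp
    ring
  -- key per-term bound
  have hkey : ∀ k ∈ Finset.Icc i n,
      Gf ((k:ℝ)+1) - Gf (k:ℝ) ≤ (1/(k:ℝ)^2) * ∑ j ∈ Finset.Icc 1 k, a j := by
    intro k hk
    simp only [Finset.mem_Icc] at hk
    have hk1 : 1 ≤ k := le_trans hi1 hk.1
    have hk1' : (1:ℝ) ≤ (k:ℝ) := by exact_mod_cast hk1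
    have hkn' : (k:ℝ) + 1 ≤ (n:ℝ) + 1 := by
      have : (k:ℝ) ≤ (n:ℝ) := by exact_mod_cast hk.2
      linarith
    rw [hSk k hk1 hk.2]
    have hFTC : Gf ((k:ℝ)+1) - Gf (k:ℝ)
        = ∫ x in (k:ℝ)..((k:ℝ)+1), 2 * x ^ (-(3:ℝ)/2) * Real.sin (α * Real.log x) := by
      rw [intervalIntegral.integral_eq_sub_of_hasDerivAt]
      · intro x hx
        rw [Set.uIcc_of_le (by linarith : (k:ℝ) ≤ (k:ℝ)+1)] at hx
        exact hG' x (by linarith [hx.1])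
      · apply ContinuousOn.intervalIntegrable
        intro x hx
        rw [Set.uIcc_of_le (by linarith : (k:ℝ) ≤ (k:ℝ)+1)] at hx
        exact (aux_cont_g α x (by linarith [hx.1])).continuousWithinAt
    rw [hFTC]
    have hHk0 : 0 ≤ Hf ((k:ℝ)+1) := by
      show 0 ≤ 2 * ((k:ℝ)+1) ^ ((1:ℝ)/2) * Real.sin (α * Real.log ((k:ℝ)+1))
      have hs := hsinnn ((k:ℝ)+1) (by linarith) hkn'
      have : (0:ℝ) ≤ 2 * ((k:ℝ)+1) ^ ((1:ℝ)/2) := by positivity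
      exact mul_nonneg this hs
    have hbound : ∀ x ∈ Set.Icc (k:ℝ) ((k:ℝ)+1),
        2 * x ^ (-(3:ℝ)/2) * Real.sin (α * Real.log x) ≤ Hf ((k:ℝ)+1) / (k:ℝ)^2 := by
      intro x hx
      have hx1 : (1:ℝ) ≤ x := le_trans hk1' hx.1
      have hx0 : (0:ℝ) < x := by linarith
      have hgx : 2 * x ^ (-(3:ℝ)/2) * Real.sin (α * Real.log x) = Hf x / x^2 := by
        have hxx : x ^ (-(3:ℝ)/2) = x ^ ((1:ℝ)/2) / x^2 := by
          rw [eq_div_iff (by positivity : (x:ℝ)^2 ≠ 0), ← Real.rpow_natCast x 2,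
            ← Real.rpow_add hx0]
          norm_num
        rw [hxx]
        show _ = 2 * x ^ ((1:ℝ)/2) * Real.sin (α * Real.log x) / x^2
        ring
      rw [hgx]
      apply div_le_div₀ hHk0
      · exact hmono (Set.mem_Icc.mpr ⟨hx1, le_trans hx.2 hkn'⟩)
          (Set.mem_Icc.mpr ⟨by linarith, hkn'⟩) hx.2
      · positivity
      · exact pow_le_pow_left₀ (by linarith) hx.1 2
    calc (∫ x in (k:ℝ)..((k:ℝ)+1), 2 * x ^ (-(3:ℝ)/2) * Real.sin (α * Real.log x))
        ≤ ∫ _x in (k:ℝ)..((k:ℝ)+1), Hf ((k:ℝ)+1) / (k:ℝ)^2 := by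
          apply intervalIntegral.integral_mono_on (by linarith)
          · apply ContinuousOn.intervalIntegrable
            intro x hx
            rw [Set.uIcc_of_le (by linarith : (k:ℝ) ≤ (k:ℝ)+1)] at hx
            exact (aux_cont_g α x (by linarith [hx.1])).continuousWithinAt
          · exact intervalIntegrable_const
          · exact hbound
      _ = Hf ((k:ℝ)+1) / (k:ℝ)^2 := by
          rw [intervalIntegral.integral_const, add_sub_cancel_left, one_smul]
      _ = (1/(k:ℝ)^2) * Hf ((k:ℝ)+1) := by ring
  -- a i ≤ hf i
  have hi1' : (1:ℝ) ≤ (i:ℝ) := by exact_mod_cast hi1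
  have hin' : (i:ℝ) + 1 ≤ (n:ℝ) + 1 := by
    have : (i:ℝ) ≤ (n:ℝ) := by exact_mod_cast hin
    linarith
  have hai : a i ≤ hf (i:ℝ) := by
    rw [ha i hi1 hin]
    have hmon : (∫ x in (i:ℝ)..((i:ℝ)+1), hf x) ≤ ∫ _x in (i:ℝ)..((i:ℝ)+1), hf (i:ℝ) := by
      apply intervalIntegral.integral_mono_on (by linarith)
      · apply ContinuousOn.intervalIntegrable
        intro x hx
        rw [Set.uIcc_of_le (by linarith : (i:ℝ) ≤ (i:ℝ)+1)] at hx
        exact ((aux_hasDerivAt_h α x (by linarith [hx.1] : (0:ℝ) < x)).continuousAt).continuousWithinAt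
      · exact intervalIntegrable_const
      · intro x hx
        exact hanti (Set.mem_Icc.mpr ⟨hi1', hin'.trans' (by linarith [hx.2]) ⟩)
          (Set.mem_Icc.mpr ⟨le_trans hi1' hx.1, le_trans hx.2 hin'⟩) hx.1
    rw [intervalIntegral.integral_const, add_sub_cancel_left, one_smul] at hmon
    exact hmon
  have hden : (0:ℝ) < 1 + 4*α^2 := by positivity
  calc ∑ k ∈ Finset.Icc i n, (1 / (k : ℝ) ^ 2) * ∑ j ∈ Finset.Icc 1 k, a j
      ≥ ∑ k ∈ Finset.Icc i n, (Gf ((k:ℝ)+1) - Gf (k:ℝ)) := Finset.sum_le_sum hkey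
    _ = Gf ((n:ℝ)+1) - Gf (i:ℝ) := by
        rw [show ∑ k ∈ Finset.Icc i n, (Gf ((k:ℝ)+1) - Gf (k:ℝ))
            = ∑ k ∈ Finset.Icc i n, ((fun m : ℕ => Gf (m:ℝ)) (k+1) - (fun m : ℕ => Gf (m:ℝ)) k)
          from Finset.sum_congr rfl (fun k _ => by push_cast; ring_nf),
          aux_telescope (fun m : ℕ => Gf (m:ℝ)) i n hin]
        push_cast
        ring_nf
    _ = (4/(1+4*α^2)) * hf (i:ℝ) := by
        show (-4/(1+4*α^2)) * hf ((n:ℝ)+1) - (-4/(1+4*α^2)) * hf (i:ℝ) = _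
        rw [hend]
        ring
    _ ≥ (4/(1+4*α^2)) * a i := by
        apply mul_le_mul_of_nonneg_left hai (by positivity)
end
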